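/- Let a > 3 be an odd integer and let b, b' be odd integers coprime with a. Set I(b) = L_b / F_{b+a} viewed modulo F_a (well-defined since F_{b+a} is invertible mod F_a). Then I(b) ≡ ± I(b') (mod F_a) if and only if b ≡ ± b' (mod a). -/

import Mathlib

/-- Fibonacci numbers extended to all integer indices. -/
def fibZ : ℤ → ℤ
  | Int.ofNat n => Nat.fib n
  | Int.negSucc n => (-1) ^ n * Nat.fib (n + 1)

lemma fibZ_ofNat (n : ℕ) : fibZ (n : ℤ) = Nat.fib n := rfl
lemma fibZ_negSucc (n : ℕ) : fibZ (Int.negSucc n) = (-1) ^ n * Nat.fib (n + 1) := rfl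

lemma fibZ_rec (n : ℤ) : fibZ (n + 2) = fibZ (n + 1) + fibZ n := by
  match n with
  | Int.ofNat k =>
    show fibZ ((k : ℤ) + 2) = fibZ ((k : ℤ) + 1) + fibZ k
    have h2 : ((k : ℤ) + 2) = ((k + 2 : ℕ) : ℤ) := by push_cast; ring
    have h1 : ((k : ℤ) + 1) = ((k + 1 : ℕ) : ℤ) := by push_cast; ring
    rw [h2, h1, fibZ_ofNat, fibZ_ofNat, fibZ_ofNat, Nat.fib_add_two]
    push_cast; ring
  | Int.negSucc 0 =>
    show fibZ 1 = fibZ 0 + fibZ (Int.negSucc 0)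
    norm_num [fibZ_negSucc]
    rfl
  | Int.negSucc 1 =>
    show fibZ 0 = fibZ (Int.negSucc 0) + fibZ (Int.negSucc 1)
    norm_num [fibZ_negSucc]
    rfl
  | Int.negSucc (k+2) =>
    have e2 : Int.negSucc (k+2) + 2 = Int.negSucc k := by
      simp [Int.negSucc_eq]; ring
    have e1 : Int.negSucc (k+2) + 1 = Int.negSucc (k+1) := by
      simp [Int.negSucc_eq]; ring
    rw [e2, e1, fibZ_negSucc, fibZ_negSucc, fibZ_negSucc]
    rw [Nat.fib_add_two (n := k+1)]
    push_cast; ring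

lemma fibLike_zero (f : ℤ → ℤ) (hrec : ∀ n, f (n + 2) = f (n + 1) + f n)
    (h0 : f 0 = 0) (h1 : f 1 = 0) : ∀ n, f n = 0 := by
  have pos : ∀ k : ℕ, f k = 0 ∧ f (k + 1) = 0 := by
    intro k
    induction k with
    | zero => exact ⟨h0, h1⟩
    | succ k ih =>
      refine ⟨ih.2, ?_⟩
      have := hrec k
      push_cast
      rw [show ((k:ℤ) + 1 + 1) = (k:ℤ) + 2 by ring, this, ih.1, ih.2]; ring
  have neg : ∀ k : ℕ, f (-(k : ℤ)) = 0 ∧ f (-(k : ℤ) + 1) = 0 := by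
    intro k
    induction k with
    | zero => simpa using ⟨h0, h1⟩
    | succ k ih =>
      have hr := hrec (-(k : ℤ) - 1)
      have e1 : -((k : ℤ) + 1) + 1 = -(k : ℤ) := by ring
      have e2 : -(k:ℤ) - 1 + 2 = -(k:ℤ) + 1 := by ring
      have e3 : -(k:ℤ) - 1 + 1 = -(k:ℤ) := by ring
      have e4 : -((k:ℕ):ℤ) - 1 = -(((k+1:ℕ)):ℤ) := by push_cast; ring
      rw [e2, e3] at hr
      constructor
      · rw [show -(((k+1:ℕ)):ℤ) = -(k:ℤ) - 1 by push_cast; ring]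
        have : f (-(k:ℤ) - 1) = f (-(k:ℤ) + 1) - f (-(k:ℤ)) := by omega
        rw [this, ih.1, ih.2]; ring
      · rw [show -(((k+1:ℕ)):ℤ) + 1 = -(k:ℤ) by push_cast; ring]
        exact ih.1
  intro n
  rcases le_or_gt 0 n with h | h
  · lift n to ℕ using h
    exact (pos n).1
  · have : n = -((n.natAbs : ℕ) : ℤ) := by
      omega
    rw [this]
    exact (neg n.natAbs).1

lemma fibZ_zero : fibZ 0 = 0 := rfl
lemma fibZ_one : fibZ 1 = 1 := rfl
lemma fibZ_two : fibZ 2 = 1 := rfl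

lemma fibZ_add (m n : ℤ) :
    fibZ (m + n) = fibZ m * fibZ (n + 1) + fibZ (m - 1) * fibZ n := by
  have := fibLike_zero
    (fun n => fibZ (m + n) - (fibZ m * fibZ (n + 1) + fibZ (m - 1) * fibZ n))
    (fun k => by
      have h1 := fibZ_rec (m + k)
      have h2 := fibZ_rec k
      have h3 := fibZ_rec (k + 1)
      have e1 : m + (k + 2) = m + k + 2 := by ring
      have e2 : m + (k + 1) = m + k + 1 := by ring
      have e3 : k + 2 + 1 = k + 1 + 2 := by ring
      rw [e1, e2, e3, h1, h3, h2]
      ring)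
    (by simp [fibZ_zero, fibZ_one])
    (by
      have := fibZ_rec (m - 1)
      have e : m - 1 + 2 = m + 1 := by ring
      have e2 : m - 1 + 1 = m := by ring
      rw [e, e2] at this
      simp [fibZ_two, fibZ_one, this]) n
  linarith

lemma fibZ_neg_nat (k : ℕ) : fibZ (-((k : ℤ) + 1)) = (-1) ^ k * Nat.fib (k + 1) := by
  have : -((k : ℤ) + 1) = Int.negSucc k := by
    rw [Int.negSucc_eq]
  rw [this, fibZ_negSucc]

lemma fibZ_neg_odd {n : ℤ} (h : Odd n) : fibZ (-n) = fibZ n := by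
  wlog hn : 0 < n generalizing n
  · push_neg at hn
    have h' : Odd (-n) := h.neg
    have := this h' (by rcases h with ⟨k, hk⟩; omega)
    rw [neg_neg] at this; rw [← this]
  · obtain ⟨k, hk⟩ : ∃ k : ℕ, n = (k : ℤ) + 1 := ⟨(n-1).toNat, by omega⟩
    have hodd : Odd ((k:ℤ) + 1) := hk ▸ h
    have hk_even : Even k := by
      rcases Nat.even_or_odd k with he | ho
      · exact he
      · exfalso; rcases ho with ⟨j, hj⟩; rcases hodd with ⟨m, hm⟩; omega
    rw [hk, fibZ_neg_nat, show ((k:ℤ)+1) = ((k+1 : ℕ) : ℤ) by push_cast; ring, fibZ_ofNat,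
      hk_even.neg_one_pow, one_mul]

lemma fibZ_neg_even {n : ℤ} (h : Even n) : fibZ (-n) = -fibZ n := by
  wlog hn : 0 < n generalizing n
  · push_neg at hn
    rcases eq_or_lt_of_le hn with he | hl
    · subst he; simp [fibZ_zero]
    · have h' : Even (-n) := h.neg
      have := this h' (by omega)
      rw [neg_neg] at this; omega
  · obtain ⟨k, hk⟩ : ∃ k : ℕ, n = (k : ℤ) + 1 := ⟨(n-1).toNat, by omega⟩
    have heven : Even ((k:ℤ) + 1) := hk ▸ h
    have hk_odd : Odd k := by
      rcases Nat.even_or_odd k with he | ho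
      · exfalso; rcases he with ⟨j, hj⟩; rcases heven with ⟨m, hm⟩; omega
      · exact ho
    rw [hk, fibZ_neg_nat, show ((k:ℤ)+1) = ((k+1 : ℕ) : ℤ) by push_cast; ring, fibZ_ofNat,
      hk_odd.neg_one_pow]
    ring

lemma fibZ_coprime_succ {a : ℤ} (ha : Odd a) : IsCoprime (fibZ a) (fibZ (a + 1)) := by
  have key : fibZ a * fibZ a + (-fibZ (a - 1)) * fibZ (a + 1) = 1 := by
    have h := fibZ_add (a + 1) (-a)
    have e1 : a + 1 + -a = 1 := by ring
    have e2 : -a + 1 = -(a - 1) := by ring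
    rw [e1, e2, fibZ_neg_odd ha, fibZ_neg_even (by rcases ha with ⟨k,hk⟩; exact ⟨k, by omega⟩ : Even (a-1)),
      show a + 1 - 1 = a by ring, fibZ_one] at h
    linarith [h]
  exact ⟨fibZ a, -fibZ (a - 1), by linarith [key]⟩



/-- Lucas numbers extended to all integer indices: `L_n = F_{n−1} + F_{n+1}`. -/
def lucZ (n : ℤ) : ℤ := fibZ (n - 1) + fibZ (n + 1)

lemma luc_mul_add (m n : ℤ) :
    lucZ m * fibZ n + fibZ m * lucZ n = 2 * fibZ (m + n) := by
  have h1 := fibZ_add m n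
  have h2 := fibZ_add n m
  rw [add_comm n m] at h2
  simp only [lucZ]
  linear_combination -h1 - h2

lemma luc_mul_sub (m n : ℤ) (hn : Odd n) :
    lucZ m * fibZ n - fibZ m * lucZ n = 2 * fibZ (m - n) := by
  have h := fibZ_add m (-n)
  have e1 : m + -n = m - n := by ring
  have e2 : -n + 1 = -(n - 1) := by ring
  have hev : Even (n - 1) := by rcases hn with ⟨k, hk⟩; exact ⟨k, by omega⟩
  rw [e1, e2, fibZ_neg_even hev, fibZ_neg_odd hn] at h
  have rm := fibZ_rec (m - 1)
  rw [show m - 1 + 2 = m + 1 by ring, show m - 1 + 1 = m by ring] at rm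
  have rn := fibZ_rec (n - 1)
  rw [show n - 1 + 2 = n + 1 by ring, show n - 1 + 1 = n by ring] at rn
  simp only [lucZ]
  linear_combination -2 * h + fibZ n * rm - fibZ m * rn

lemma fibZ_natAbs (c : ℤ) : (fibZ c).natAbs = Nat.fib c.natAbs := by
  match c with
  | Int.ofNat n => simp [fibZ_ofNat]
  | Int.negSucc n =>
    rw [fibZ_negSucc]
    simp [Int.natAbs_mul, Int.natAbs_pow]

lemma nat_key (A C : ℕ) (hA : Odd A) (hA5 : 5 ≤ A)
    (h : Nat.fib A ∣ 2 * Nat.fib C) : A ∣ C := by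
  set g := Nat.gcd A C with hg
  have hgA : g ∣ A := Nat.gcd_dvd_left A C
  have hfg : Nat.fib A ∣ 2 * Nat.fib g := by
    rw [hg, Nat.fib_gcd, ← Nat.gcd_mul_left]
    exact Nat.dvd_gcd (dvd_mul_left _ 2) h
  have hgpos : 0 < g := Nat.gcd_pos_of_pos_left C (by omega)
  have hgeq : g = A := by
    by_contra hne
    have hglt : g < A := lt_of_le_of_ne (Nat.le_of_dvd (by omega) hgA) hne
    obtain ⟨t, ht⟩ := hgA
    have ht2 : 2 ≤ t := by
      rcases Nat.lt_or_ge t 2 with h' | h'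
      · interval_cases t <;> omega
      · exact h'
    have htodd : Odd t := by
      rcases Nat.even_or_odd t with he | ho
      · exfalso
        rcases he with ⟨j, hj⟩
        rcases hA with ⟨k, hk⟩
        have : A = g * j + g * j := by rw [ht, hj]; ring
        omega
      · exact ho
    have ht3 : 3 ≤ t := by
      rcases htodd with ⟨j, hj⟩; omega
    have hA3g : 3 * g ≤ A := by
      calc 3 * g ≤ t * g := Nat.mul_le_mul_right g ht3
      _ = A := by rw [ht]; ring
    rcases Nat.lt_or_ge g 2 with hg1 | hg2
    · -- g = 1
      have : g = 1 := by omega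
      rw [this] at hfg
      have h5 : Nat.fib 5 ≤ Nat.fib A := Nat.fib_mono hA5
      have : Nat.fib A ≤ 2 := Nat.le_of_dvd (by norm_num) hfg
      have h55 : Nat.fib 5 = 5 := by decide
      omega
    · -- g ≥ 2
      have hfib_lt : Nat.fib g < Nat.fib (g + 1) := Nat.fib_lt_fib_succ hg2
      have hle : Nat.fib (g + 2) ≤ Nat.fib A := Nat.fib_mono (by omega)
      have hpos : 0 < Nat.fib g := Nat.fib_pos.mpr (by omega)
      have hub : Nat.fib A ≤ 2 * Nat.fib g := Nat.le_of_dvd (by omega) hfg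
      rw [Nat.fib_add_two] at hle
      omega
  exact hgeq ▸ Nat.gcd_dvd_right A C

lemma key_dvd (a c : ℤ) (ha : Odd a) (ha3 : 3 < a) :
    fibZ a ∣ 2 * fibZ c ↔ a ∣ c := by
  constructor
  · intro h
    have h' : (fibZ a).natAbs ∣ (2 * fibZ c).natAbs := Int.natAbs_dvd_natAbs.mpr h
    rw [Int.natAbs_mul, fibZ_natAbs, fibZ_natAbs] at h'
    obtain ⟨k, hk⟩ := ha
    have hA5 : 5 ≤ a.natAbs := by omega
    have hAodd : Odd a.natAbs := ⟨(a.natAbs - 1)/2, by omega⟩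
    have := nat_key a.natAbs c.natAbs hAodd hA5 (by simpa using h')
    rwa [Int.natAbs_dvd_natAbs] at this
  · intro h
    have h' : a.natAbs ∣ c.natAbs := Int.natAbs_dvd_natAbs.mpr h
    have hf : Nat.fib a.natAbs ∣ Nat.fib c.natAbs := Nat.fib_dvd _ _ h'
    have : (fibZ a).natAbs ∣ (fibZ c).natAbs := by rw [fibZ_natAbs, fibZ_natAbs]; exact hf
    exact dvd_mul_of_dvd_right (Int.natAbs_dvd_natAbs.mp this) 2

/-- for `a > 3` odd and `b, b'` odd and coprime with `a`,
one has `I(b) ≡ ± I(b') (mod F_a)` if and only if `b ≡ ± b' (mod a)`,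
where `I(b) = L_b / F_{b+a} mod F_a` (well defined since `F_{b+a}` is
invertible modulo `F_a`); the congruence of the quotients is expressed by
cross-multiplication. -/
theorem stmt19 (a b b' : ℤ) (ha : Odd a) (ha3 : 3 < a)
    (hb : Odd b) (hb' : Odd b')
    (hba : IsCoprime b a) (hb'a : IsCoprime b' a) :
    (fibZ a ∣ lucZ b * fibZ (b' + a) - lucZ b' * fibZ (b + a) ∨
     fibZ a ∣ lucZ b * fibZ (b' + a) + lucZ b' * fibZ (b + a)) ↔
    (a ∣ b - b' ∨ a ∣ b + b') := by
  have hexp : fibZ (b + a) = fibZ b * fibZ (a + 1) + fibZ (b - 1) * fibZ a := fibZ_add b a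
  have hexp' : fibZ (b' + a) = fibZ b' * fibZ (a + 1) + fibZ (b' - 1) * fibZ a := fibZ_add b' a
  have hcop := fibZ_coprime_succ ha
  have hX : lucZ b * fibZ (b' + a) - lucZ b' * fibZ (b + a) =
      2 * fibZ (b - b') * fibZ (a + 1) +
        (lucZ b * fibZ (b' - 1) - lucZ b' * fibZ (b - 1)) * fibZ a := by
    linear_combination lucZ b * hexp' - lucZ b' * hexp +
      fibZ (a + 1) * (luc_mul_sub b b' hb')
  have hY : lucZ b * fibZ (b' + a) + lucZ b' * fibZ (b + a) =
      2 * fibZ (b + b') * fibZ (a + 1) +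
        (lucZ b * fibZ (b' - 1) + lucZ b' * fibZ (b - 1)) * fibZ a := by
    linear_combination lucZ b * hexp' + lucZ b' * hexp +
      fibZ (a + 1) * (luc_mul_add b b')
  have h1 : fibZ a ∣ lucZ b * fibZ (b' + a) - lucZ b' * fibZ (b + a) ↔ a ∣ b - b' := by
    rw [hX, dvd_add_left (dvd_mul_left (fibZ a) _)]
    constructor
    · intro h
      rw [← key_dvd a (b - b') ha ha3]
      exact hcop.dvd_of_dvd_mul_right (by rwa [mul_assoc] at h ⊢)
    · intro h
      exact dvd_mul_of_dvd_left ((key_dvd a (b - b') ha ha3).mpr h) _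
  have h2 : fibZ a ∣ lucZ b * fibZ (b' + a) + lucZ b' * fibZ (b + a) ↔ a ∣ b + b' := by
    rw [hY, dvd_add_left (dvd_mul_left (fibZ a) _)]
    constructor
    · intro h
      rw [← key_dvd a (b + b') ha ha3]
      exact hcop.dvd_of_dvd_mul_right (by rwa [mul_assoc] at h ⊢)
    · intro h
      exact dvd_mul_of_dvd_left ((key_dvd a (b + b') ha ha3).mpr h) _
  rw [h1, h2]
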